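/- Let p be a prime and let F, G ∈ ℤ_p⟦T⟧ be nonzero power series. Then F·G is nonzero, μ(F·G) = μ(F) + μ(G), and λ(F·G) = λ(F) + λ(G). -/

import Mathlib

open PowerSeries Polynomial Classical in
/-- `p`-adic valuation on `ℤ_[p]`, with value `⊤` at `0`. -/
noncomputable def vp (p : ℕ) [Fact p.Prime] (x : ℤ_[p]) : ℕ∞ :=
  if x = 0 then ⊤ else x.valuation

/-- Iwasawa `μ`-invariant: the minimum of the `p`-adic valuations of the coefficients. -/
noncomputable def mu (p : ℕ) [Fact p.Prime] (F : PowerSeries ℤ_[p]) : ℕ∞ :=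
  ⨅ i : ℕ, vp p (PowerSeries.coeff i F)

/-- Iwasawa `λ`-invariant: the least index whose coefficient valuation attains `μ`. -/
noncomputable def lam (p : ℕ) [Fact p.Prime] (F : PowerSeries ℤ_[p]) : ℕ :=
  sInf { i : ℕ | vp p (PowerSeries.coeff i F) = mu p F }

section Aux

variable {p : ℕ} [Fact p.Prime]

lemma vp_zero' : vp p 0 = ⊤ := by unfold vp; simp

lemma vp_of_ne {x : ℤ_[p]} (hx : x ≠ 0) : vp p x = (x.valuation : ℕ∞) := by
  unfold vp; rw [if_neg hx]

lemma vp_ne_top {x : ℤ_[p]} (hx : x ≠ 0) : vp p x ≠ ⊤ := by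
  rw [vp_of_ne hx]; exact WithTop.coe_ne_top

lemma vp_eq_top_iff {x : ℤ_[p]} : vp p x = ⊤ ↔ x = 0 := by
  constructor
  · intro h; by_contra hx; exact vp_ne_top hx h
  · intro h; rw [h]; exact vp_zero'

lemma padicInt_valuation_mul {x y : ℤ_[p]} (hx : x ≠ 0) (hy : y ≠ 0) :
    (x * y).valuation = x.valuation + y.valuation := by
  exact PadicInt.valuation_mul hx hy

lemma vp_mul (x y : ℤ_[p]) : vp p (x * y) = vp p x + vp p y := by
  by_cases hx : x = 0
  · simp [hx, vp_zero', top_add]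
  by_cases hy : y = 0
  · simp [hy, vp_zero', add_top]
  have hxy : x * y ≠ 0 := mul_ne_zero hx hy
  rw [vp_of_ne hxy, vp_of_ne hx, vp_of_ne hy,
    padicInt_valuation_mul hx hy,
    Nat.cast_add]

lemma min_le_vp_add (x y : ℤ_[p]) : min (vp p x) (vp p y) ≤ vp p (x + y) := by
  by_cases hxy : x + y = 0
  · rw [hxy, vp_zero']; exact le_top
  by_cases hx : x = 0
  · rw [hx, zero_add]; exact min_le_right _ _
  by_cases hy : y = 0
  · rw [hy, add_zero]; exact min_le_left _ _
  have key : min x.valuation y.valuation ≤ (x + y).valuation := by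
    have := PadicInt.le_valuation_add hxy
    exact this
  rw [vp_of_ne hx, vp_of_ne hy, vp_of_ne hxy]
  rcases min_le_iff.mp key with h | h
  · exact min_le_of_left_le (by exact_mod_cast h)
  · exact min_le_of_right_le (by exact_mod_cast h)

lemma vp_neg (y : ℤ_[p]) : vp p (-y) = vp p y := by
  by_cases hy : y = 0
  · simp [hy]
  have hny : -y ≠ 0 := neg_ne_zero.mpr hy
  have h1 : (1 : ℝ) < p := by exact_mod_cast (Fact.out : p.Prime).one_lt
  have h := PadicInt.norm_eq_zpow_neg_valuation hny
  rw [norm_neg, PadicInt.norm_eq_zpow_neg_valuation hy] at h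
  have hval : (-y).valuation = y.valuation := by
    exact_mod_cast neg_inj.mp ((zpow_right_strictMono₀ h1).injective h.symm)
  rw [vp_of_ne hny, vp_of_ne hy, hval]

lemma vp_add_eq_left {x y : ℤ_[p]} (h : vp p x < vp p y) : vp p (x + y) = vp p x := by
  refine le_antisymm ?_ ?_
  · by_contra hlt
    push_neg at hlt
    have h2 : min (vp p (x + y)) (vp p (-y)) ≤ vp p x := by
      have := min_le_vp_add (x + y) (-y)
      simpa using this
    rw [vp_neg] at h2
    rcases min_le_iff.mp h2 with h3 | h3
    · exact absurd h3 (not_le.mpr hlt)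
    · exact absurd h3 (not_le.mpr h)
  · calc vp p x = min (vp p x) (vp p y) := (min_eq_left h.le).symm
      _ ≤ vp p (x + y) := min_le_vp_add x y

lemma le_vp_sum {α : Type*} (s : Finset α) (f : α → ℤ_[p]) (c : ℕ∞)
    (h : ∀ a ∈ s, c ≤ vp p (f a)) : c ≤ vp p (∑ a ∈ s, f a) := by
  induction s using Finset.cons_induction with
  | empty => rw [Finset.sum_empty, vp_zero']; exact le_top
  | cons a s ha ih =>
    rw [Finset.sum_cons]
    refine le_trans (le_min (h a (Finset.mem_cons_self a s)) ?_) (min_le_vp_add _ _)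
    exact ih fun b hb => h b (Finset.mem_cons_of_mem hb)

lemma lt_vp_sum {α : Type*} (s : Finset α) (f : α → ℤ_[p]) (c : ℕ∞) (hc : c ≠ ⊤)
    (h : ∀ a ∈ s, c < vp p (f a)) : c < vp p (∑ a ∈ s, f a) := by
  induction s using Finset.cons_induction with
  | empty => rw [Finset.sum_empty, vp_zero']; exact lt_top_iff_ne_top.mpr hc
  | cons a s ha ih =>
    rw [Finset.sum_cons]
    refine lt_of_lt_of_le (lt_min (h a (Finset.mem_cons_self a s)) ?_) (min_le_vp_add _ _)
    exact ih fun b hb => h b (Finset.mem_cons_of_mem hb)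

lemma mu_ne_top {F : PowerSeries ℤ_[p]} (hF : F ≠ 0) : mu p F ≠ ⊤ := by
  obtain ⟨i, hi⟩ : ∃ i, PowerSeries.coeff i F ≠ 0 := by
    by_contra h
    push_neg at h
    exact hF (PowerSeries.ext fun n => by rw [h n, map_zero])
  intro htop
  have := iInf_le (fun i : ℕ => vp p (PowerSeries.coeff i F)) i
  rw [← mu, htop, top_le_iff] at this
  exact vp_ne_top hi this

lemma mu_le_vp (F : PowerSeries ℤ_[p]) (i : ℕ) :
    mu p F ≤ vp p (PowerSeries.coeff i F) :=
  iInf_le _ i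

lemma exists_vp_eq_mu {F : PowerSeries ℤ_[p]} (hF : F ≠ 0) :
    ∃ i, vp p (PowerSeries.coeff i F) = mu p F := by
  obtain ⟨n, hn⟩ := WithTop.ne_top_iff_exists.mp (mu_ne_top hF)
  have hn' : (n : ℕ∞) = mu p F := by exact_mod_cast hn
  by_contra h
  push_neg at h
  have hall : ∀ i, (n : ℕ∞) + 1 ≤ vp p (PowerSeries.coeff i F) := by
    intro i
    rw [ENat.add_one_le_iff (by simp : (n : ℕ∞) ≠ ⊤), hn']
    exact lt_of_le_of_ne (mu_le_vp F i) (Ne.symm (h i))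
  have h2 : (n : ℕ∞) + 1 ≤ mu p F := le_iInf hall
  rw [← hn'] at h2
  exact absurd h2 (by exact_mod_cast (by omega : ¬(n + 1 ≤ n)))

lemma vp_lam {F : PowerSeries ℤ_[p]} (hF : F ≠ 0) :
    vp p (PowerSeries.coeff (lam p F) F) = mu p F :=
  Nat.sInf_mem (exists_vp_eq_mu hF)

lemma mu_lt_vp_of_lt_lam {F : PowerSeries ℤ_[p]} {i : ℕ} (hi : i < lam p F) :
    mu p F < vp p (PowerSeries.coeff i F) := by
  have hne : vp p (PowerSeries.coeff i F) ≠ mu p F :=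
    Nat.notMem_of_lt_sInf hi
  exact lt_of_le_of_ne (mu_le_vp F i) (Ne.symm hne)

lemma enat_add_lt_add_left {a b c d : ℕ∞} (ha : a ≠ ⊤) (hb : b ≠ ⊤)
    (h1 : a < c) (h2 : b ≤ d) : a + b < c + d := by
  refine (ENat.add_one_le_iff (WithTop.add_ne_top.mpr ⟨ha, hb⟩)).mp ?_
  calc a + b + 1 = (a + 1) + b := by ring
    _ ≤ c + d := add_le_add ((ENat.add_one_le_iff ha).mpr h1) h2

end Aux

theorem stmt_5 (p : ℕ) [Fact p.Prime] (F G : PowerSeries ℤ_[p]) (hF : F ≠ 0) (hG : G ≠ 0) :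
    F * G ≠ 0 ∧ mu p (F * G) = mu p F + mu p G ∧ lam p (F * G) = lam p F + lam p G := by
  set N := lam p F + lam p G with hN
  have hmuF := mu_ne_top hF
  have hmuG := mu_ne_top hG
  have hmuFG : mu p F + mu p G ≠ ⊤ := WithTop.add_ne_top.mpr ⟨hmuF, hmuG⟩
  -- Fact A : lower bound for every coefficient of F * G
  have factA : ∀ n, mu p F + mu p G ≤ vp p (PowerSeries.coeff n (F * G)) := by
    intro n
    rw [PowerSeries.coeff_mul]
    refine le_vp_sum _ _ _ fun q _ => ?_
    rw [vp_mul]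
    exact add_le_add (mu_le_vp F q.1) (mu_le_vp G q.2)
  -- Fact B : strict lower bound below N
  have factB : ∀ n < N, mu p F + mu p G < vp p (PowerSeries.coeff n (F * G)) := by
    intro n hn
    rw [PowerSeries.coeff_mul]
    refine lt_vp_sum _ _ _ hmuFG fun q hq => ?_
    rw [Finset.HasAntidiagonal.mem_antidiagonal] at hq
    rw [vp_mul]
    rcases lt_or_ge q.1 (lam p F) with h1 | h1
    · exact enat_add_lt_add_left hmuF hmuG (mu_lt_vp_of_lt_lam h1) (mu_le_vp G q.2)
    · have h2 : q.2 < lam p G := by omega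
      rw [add_comm (mu p F) (mu p G), add_comm (vp p _) (vp p _)]
      exact enat_add_lt_add_left hmuG hmuF (mu_lt_vp_of_lt_lam h2) (mu_le_vp F q.1)
  -- Fact C : exact valuation at N
  have factC : vp p (PowerSeries.coeff N (F * G)) = mu p F + mu p G := by
    rw [PowerSeries.coeff_mul]
    have hq : ((lam p F, lam p G) : ℕ × ℕ) ∈ Finset.HasAntidiagonal.antidiagonal N := by
      rw [Finset.HasAntidiagonal.mem_antidiagonal]
    rw [← Finset.add_sum_erase _ _ hq]
    have hx : vp p (PowerSeries.coeff (lam p F) F *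
        PowerSeries.coeff (lam p G) G) = mu p F + mu p G := by
      rw [vp_mul, vp_lam hF, vp_lam hG]
    have hy : mu p F + mu p G < vp p (∑ q ∈ (Finset.HasAntidiagonal.antidiagonal N).erase (lam p F, lam p G),
        PowerSeries.coeff q.1 F * PowerSeries.coeff q.2 G) := by
      refine lt_vp_sum _ _ _ hmuFG fun q hq' => ?_
      have hqa := Finset.mem_of_mem_erase hq'
      have hqne := Finset.ne_of_mem_erase hq'
      rw [Finset.HasAntidiagonal.mem_antidiagonal] at hqa
      rw [vp_mul]
      rcases lt_trichotomy q.1 (lam p F) with h1 | h1 | h1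
      · exact enat_add_lt_add_left hmuF hmuG (mu_lt_vp_of_lt_lam h1) (mu_le_vp G q.2)
      · exact absurd (Prod.ext h1 (by omega)) hqne
      · have h2 : q.2 < lam p G := by omega
        rw [add_comm (mu p F) (mu p G), add_comm (vp p _) (vp p _)]
        exact enat_add_lt_add_left hmuG hmuF (mu_lt_vp_of_lt_lam h2) (mu_le_vp F q.1)
    rw [vp_add_eq_left (hx ▸ hy), hx]
  -- F * G ≠ 0
  have hFG : F * G ≠ 0 := by
    intro h0
    have : vp p (PowerSeries.coeff N (F * G)) = ⊤ := by
      rw [h0, map_zero, vp_zero']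
    rw [factC] at this
    exact hmuFG this
  -- mu of the product
  have hmu : mu p (F * G) = mu p F + mu p G := by
    refine le_antisymm ?_ (le_iInf factA)
    calc mu p (F * G) ≤ vp p (PowerSeries.coeff N (F * G)) := mu_le_vp _ N
      _ = mu p F + mu p G := factC
  refine ⟨hFG, hmu, ?_⟩
  -- lam of the product
  have hNmem : N ∈ { i : ℕ | vp p (PowerSeries.coeff i (F * G)) = mu p (F * G) } := by
    rw [Set.mem_setOf_eq, factC, hmu]
  have hlb : ∀ m ∈ { i : ℕ | vp p (PowerSeries.coeff i (F * G)) = mu p (F * G) },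
      N ≤ m := by
    intro m hm
    rw [Set.mem_setOf_eq] at hm
    by_contra hlt
    push_neg at hlt
    have := factB m hlt
    rw [hm, hmu] at this
    exact lt_irrefl _ this
  exact le_antisymm (Nat.sInf_le hNmem) (le_csInf ⟨N, hNmem⟩ hlb)
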